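/- Let γ > 1 and define χ(π) := γπ/(π+1), e(π) := (γ−1)/(γ−1−π), ζ(π) := (π+1)(χ(π)−π)χ'(π) + 2χ(π)(1−χ(π)) and η(π) := (2π+1)χ(π) − π. Set π_m := γ−1 if 1 < γ ≤ 2 and π_m := 1/(γ−1) if γ ≥ 2. Then for every π with 0 < π < π_m one has: 0 < π < 1, 0 < χ(π) < 1, ζ(π) > 0, η(π) > 0 and e(π) > 1. Conversely, if γ ≤ 1, then e(π) < 1 for every π ∈ (0,1), so the positivity requirement e(π) > 1 (i.e. ρ > n > 0) fails everywhere on (0,1). -/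

import Mathlib

noncomputable section

/-- For a classical ideal gas with adiabatic index γ > 1, with indicatrix
`χ(π) = γπ/(π+1)` and specific energy `e(π) = (γ−1)/(γ−1−π)`, the energy conditions,
both compressibility conditions and the positivity requirement `e(π) > 1` hold on
`(0, π_m)`, where `π_m = γ−1` for `1 < γ ≤ 2` and `π_m = 1/(γ−1)` for `γ ≥ 2`.
Conversely, for `γ ≤ 1` the positivity requirement fails everywhere on `(0,1)`. -/
theorem classical_ideal_gas_physical_conditions (γ : ℝ) :
    (1 < γ → ∀ π : ℝ, 0 < π → π < (if γ ≤ 2 then γ - 1 else 1 / (γ - 1)) →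
      (0 < π ∧ π < 1)
      ∧ (0 < γ * π / (π + 1) ∧ γ * π / (π + 1) < 1)
      ∧ 0 < (π + 1) * (γ * π / (π + 1) - π) * deriv (fun t => γ * t / (t + 1)) π
          + 2 * (γ * π / (π + 1)) * (1 - γ * π / (π + 1))
      ∧ 0 < (2 * π + 1) * (γ * π / (π + 1)) - π
      ∧ 1 < (γ - 1) / (γ - 1 - π))
    ∧ (γ ≤ 1 → ∀ π : ℝ, 0 < π → π < 1 → (γ - 1) / (γ - 1 - π) < 1) := by
  constructor
  · intro hγ π hπ0 hπm
    -- common facts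
    have hγ0 : (0:ℝ) < γ - 1 := by linarith
    have hlt : π < γ - 1 ∧ π * (γ - 1) < 1 := by
      by_cases h2 : γ ≤ 2
      · rw [if_pos h2] at hπm
        exact ⟨hπm, by nlinarith⟩
      · rw [if_neg h2] at hπm
        push_neg at h2
        have h1 : π * (γ - 1) < 1 := by
          rw [lt_div_iff₀ hγ0] at hπm
          linarith
        constructor
        · nlinarith
        · exact h1
    obtain ⟨hlt1, hpg⟩ := hlt
    have hπ1 : π < 1 := by nlinarith
    have hp1 : (0:ℝ) < π + 1 := by linarith
    have hne : π + 1 ≠ 0 := ne_of_gt hp1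
    have hd : deriv (fun t : ℝ => γ * t / (t + 1)) π = γ / (π + 1) ^ 2 := by
      have h1 : HasDerivAt (fun t : ℝ => γ * t) γ π := by
        simpa using (hasDerivAt_id π).const_mul γ
      have h2 : HasDerivAt (fun t : ℝ => t + 1) 1 π := by
        simpa using (hasDerivAt_id π).add_const 1
      rw [show (fun t : ℝ => γ * t / (t + 1)) = (fun t => γ * t) / (fun t => t + 1) from rfl,
        (h1.div h2 hne).deriv]
      field_simp
      ring
    refine ⟨⟨hπ0, hπ1⟩, ⟨?_, ?_⟩, ?_, ?_, ?_⟩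
    · positivity
    · rw [div_lt_one hp1]; nlinarith
    · rw [hd]
      have key : (π + 1) * (γ * π / (π + 1) - π) * (γ / (π + 1) ^ 2)
          + 2 * (γ * π / (π + 1)) * (1 - γ * π / (π + 1))
          = γ * π * (γ + 1 + π - 2 * γ * π) / (π + 1) ^ 2 := by
        field_simp
        ring
      rw [key]
      have hnum : 0 < γ + 1 + π - 2 * γ * π := by nlinarith
      positivity
    · have key : (2 * π + 1) * (γ * π / (π + 1)) - π
          = π * (π * (2 * γ - 1) + (γ - 1)) / (π + 1) := by
        field_simp
        ring
      rw [key]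
      have : 0 < π * (2 * γ - 1) + (γ - 1) := by nlinarith
      positivity
    · rw [one_lt_div (by linarith : (0:ℝ) < γ - 1 - π)]
      linarith
  · intro hγ π hπ0 hπ1
    have h1 : γ - 1 - π < 0 := by linarith
    rw [div_lt_one_iff]
    right; right
    exact ⟨h1, by linarith⟩
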